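/- Let Σ = (X, 𝒰, φ) be a monotone-w.r.t.-inputs control system with 𝒰(x) = 𝒰, and suppose conditions (i) and (ii) of the previous statement hold with ρ linear. Then Σ is exponentially ISS if and only if Σ is exponentially ISS with respect to inputs in 𝒰_c. If moreover η is linear and Σ is exp-ISS w.r.t. 𝒰_c with a linear gain, then Σ is exp-ISS with a linear gain. -/

import Mathlib

/-- Class `K`: continuous, strictly increasing, zero at zero. -/
def ClassK (γ : NNReal → NNReal) : Prop :=
  Continuous γ ∧ StrictMono γ ∧ γ 0 = 0

/-- Class `K∞`: class `K` and unbounded. -/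
def ClassKInf (γ : NNReal → NNReal) : Prop :=
  ClassK γ ∧ ∀ M : NNReal, ∃ r : NNReal, M < γ r

/-- Exponential ISS with respect to a class of inputs `S` (all inputs admissible). -/
def ExpISSOn {X U : Type*} [NormedAddCommGroup X] [NormedAddCommGroup U]
    (φ : NNReal → X → U → X) (S : Set U) : Prop :=
  ∃ M a : ℝ, 0 < M ∧ 0 < a ∧ ∃ γ, ClassKInf γ ∧
    ∀ (x : X), ∀ u ∈ S, ∀ t : NNReal,
      ‖φ t x u‖ ≤ M * Real.exp (-a * t) * ‖x‖ + (γ ‖u‖₊ : ℝ)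

/-- Exponential ISS with a linear gain, with respect to a class of inputs `S`. -/
def ExpISSLinOn {X U : Type*} [NormedAddCommGroup X] [NormedAddCommGroup U]
    (φ : NNReal → X → U → X) (S : Set U) : Prop :=
  ∃ M a c : ℝ, 0 < M ∧ 0 < a ∧ 0 ≤ c ∧
    ∀ (x : X), ∀ u ∈ S, ∀ t : NNReal,
      ‖φ t x u‖ ≤ M * Real.exp (-a * t) * ‖x‖ + c * ‖u‖

theorem stmt_5 {X U : Type*} [NormedAddCommGroup X] [Preorder X]
    [NormedAddCommGroup U] [Preorder U]
    (φ : NNReal → X → U → X) (Uc : Set U)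
    (hmono : ∀ (t : NNReal) (x : X) (u₁ u₂ : U), u₁ ≤ u₂ → φ t x u₁ ≤ φ t x u₂)
    (cρ : NNReal) -- (i) holds with the linear function ρ(s) = cρ · s
    (hsandwich : ∀ xm x xp : X, xm ≤ x → x ≤ xp → ‖x‖₊ ≤ cρ * (‖xm‖₊ + ‖xp‖₊))
    (η : NNReal → NNReal) (hη : ClassKInf η)
    (hinput : ∀ u : U, ∃ um ∈ Uc, ∃ up ∈ Uc, um ≤ u ∧ u ≤ up ∧
      ‖um‖₊ ≤ η ‖u‖₊ ∧ ‖up‖₊ ≤ η ‖u‖₊) :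
    (ExpISSOn φ (Set.univ : Set U) ↔ ExpISSOn φ Uc) ∧
      ((∃ cη : NNReal, ∀ r, η r = cη * r) →
        ExpISSLinOn φ Uc → ExpISSLinOn φ (Set.univ : Set U)) := by
  obtain ⟨⟨ηcont, ηmono, ηzero⟩, ηunb⟩ := hη
  constructor
  · constructor
    · rintro ⟨M, a, hM, ha, γ, hγ, h⟩
      exact ⟨M, a, hM, ha, γ, hγ, fun x u _ t => h x u (Set.mem_univ u) t⟩
    · rintro ⟨M, a, hM, ha, γ, ⟨⟨γcont, γmono, γzero⟩, γunb⟩, h⟩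
      refine ⟨(2 * (cρ : ℝ) + 1) * M, a, by positivity, ha,
        fun r => (2 * cρ + 1) * γ (η r), ⟨⟨?_, ?_, ?_⟩, ?_⟩, ?_⟩
      · exact continuous_const.mul (γcont.comp ηcont)
      · intro r s hrs
        exact mul_lt_mul_of_pos_left (γmono (ηmono hrs)) (by positivity)
      · show (2 * cρ + 1) * γ (η 0) = 0
        rw [ηzero, γzero, mul_zero]
      · intro N
        obtain ⟨r₁, hr₁⟩ := γunb N
        obtain ⟨r, hr⟩ := ηunb r₁
        refine ⟨r, lt_of_lt_of_le (hr₁.trans (γmono hr)) ?_⟩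
        exact le_mul_of_one_le_left zero_le (by simp)
      · intro x u _ t
        obtain ⟨um, hum, up, hup, h1, h2, h3, h4⟩ := hinput u
        have hs := hsandwich (φ t x um) (φ t x u) (φ t x up)
          (hmono t x um u h1) (hmono t x u up h2)
        have hsR : ‖φ t x u‖ ≤ (cρ : ℝ) * (‖φ t x um‖ + ‖φ t x up‖) := by
          exact_mod_cast hs
        have b1 := h x um hum t
        have b2 := h x up hup t
        have g1 : (γ ‖um‖₊ : ℝ) ≤ (γ (η ‖u‖₊) : ℝ) := by
          exact_mod_cast γmono.monotone h3
        have g2 : (γ ‖up‖₊ : ℝ) ≤ (γ (η ‖u‖₊) : ℝ) := by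
          exact_mod_cast γmono.monotone h4
        have hgoal : (((2 * cρ + 1) * γ (η ‖u‖₊) : NNReal) : ℝ)
            = (2 * (cρ : ℝ) + 1) * (γ (η ‖u‖₊) : ℝ) := by push_cast; ring
        rw [hgoal]
        have hc : (0 : ℝ) ≤ cρ := cρ.coe_nonneg
        have he : (0 : ℝ) < Real.exp (-a * t) := Real.exp_pos _
        have hx : (0 : ℝ) ≤ ‖x‖ := norm_nonneg _
        have hg : (0 : ℝ) ≤ (γ (η ‖u‖₊) : ℝ) := NNReal.coe_nonneg _
        nlinarith [mul_nonneg (mul_nonneg hM.le he.le) hx]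
  · rintro ⟨cη, hcη⟩ ⟨M, a, c, hM, ha, hc, h⟩
    refine ⟨(2 * (cρ : ℝ) + 1) * M, a, 2 * (cρ : ℝ) * c * cη, by positivity, ha,
      by positivity, ?_⟩
    intro x u _ t
    obtain ⟨um, hum, up, hup, h1, h2, h3, h4⟩ := hinput u
    have hs := hsandwich (φ t x um) (φ t x u) (φ t x up)
      (hmono t x um u h1) (hmono t x u up h2)
    have hsR : ‖φ t x u‖ ≤ (cρ : ℝ) * (‖φ t x um‖ + ‖φ t x up‖) := by
      exact_mod_cast hs
    have b1 := h x um hum t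
    have b2 := h x up hup t
    have g1 : ‖um‖ ≤ (cη : ℝ) * ‖u‖ := by
      have := h3.trans_eq (hcη ‖u‖₊)
      exact_mod_cast this
    have g2 : ‖up‖ ≤ (cη : ℝ) * ‖u‖ := by
      have := h4.trans_eq (hcη ‖u‖₊)
      exact_mod_cast this
    have hcρ : (0 : ℝ) ≤ cρ := cρ.coe_nonneg
    have he : (0 : ℝ) < Real.exp (-a * t) := Real.exp_pos _
    have hx : (0 : ℝ) ≤ ‖x‖ := norm_nonneg _
    nlinarith [mul_nonneg (mul_nonneg hM.le he.le) hx,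
      mul_le_mul_of_nonneg_left g1 hc, mul_le_mul_of_nonneg_left g2 hc,
      mul_le_mul_of_nonneg_left b1 hcρ, mul_le_mul_of_nonneg_left b2 hcρ]
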